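/- Let (Ω, F, P) be a probability space, let Φ : Ω → (0, 1/2] be measurable and integrable, and let S̃ : Ω → [0, ∞) be measurable and integrable. Then E[Φ · Q(√(S̃/(2Φ)))] ≥ E[Φ] · Q(√(E[S̃]/(2·E[Φ]))). -/

import Mathlib

open MeasureTheory

/-- The standard Gaussian tail function `Q(x) = (1/√(2π)) ∫_x^∞ exp(−z²/2) dz`. -/
noncomputable def gaussQ (x : ℝ) : ℝ :=
  (Real.sqrt (2 * Real.pi))⁻¹ * ∫ z in Set.Ioi x, Real.exp (-z ^ 2 / 2)

namespace GaussAux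

lemma C_nonneg : (0:ℝ) ≤ (Real.sqrt (2 * Real.pi))⁻¹ := by positivity

lemma gauss_integrable : Integrable (fun z : ℝ => Real.exp (-z ^ 2 / 2)) := by
  have h := integrable_exp_neg_mul_sq (b := (1/2:ℝ)) (by norm_num)
  refine h.congr ?_
  filter_upwards with z
  ring_nf

lemma gauss_nonneg (z : ℝ) : 0 ≤ Real.exp (-z ^ 2 / 2) := (Real.exp_pos _).le

lemma gaussQ_nonneg (x : ℝ) : 0 ≤ gaussQ x :=
  mul_nonneg C_nonneg (setIntegral_nonneg measurableSet_Ioi fun z _ => gauss_nonneg z)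

lemma gaussQ_antitone : Antitone gaussQ := by
  intro x y hxy
  refine mul_le_mul_of_nonneg_left ?_ C_nonneg
  exact setIntegral_mono_set gauss_integrable.integrableOn
    (Filter.Eventually.of_forall gauss_nonneg)
    (HasSubset.Subset.eventuallyLE (Set.Ioi_subset_Ioi hxy))

lemma gaussQ_le_one (x : ℝ) : gaussQ x ≤ 1 := by
  have h1 : ∫ z in Set.Ioi x, Real.exp (-z ^ 2 / 2)
      ≤ ∫ z : ℝ, Real.exp (-z ^ 2 / 2) :=
    setIntegral_le_integral gauss_integrable (Filter.Eventually.of_forall gauss_nonneg)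
  have h2 : ∫ z : ℝ, Real.exp (-z ^ 2 / 2) = Real.sqrt (2 * Real.pi) := by
    have := integral_gaussian (1/2 : ℝ)
    have heq : ∀ z : ℝ, Real.exp (-(1/2) * z ^ 2) = Real.exp (-z ^ 2 / 2) := by
      intro z; ring_nf
    rw [← integral_congr_ae (Filter.Eventually.of_forall heq)] at *
    rw [this, show Real.pi / (1/2) = 2 * Real.pi by ring]
  have hpos : 0 < Real.sqrt (2 * Real.pi) := Real.sqrt_pos.2 (by positivity)
  calc gaussQ x ≤ (Real.sqrt (2 * Real.pi))⁻¹ * Real.sqrt (2 * Real.pi) := by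
        exact mul_le_mul_of_nonneg_left (h2 ▸ h1) C_nonneg
    _ = 1 := inv_mul_cancel₀ hpos.ne'

lemma split {a b : ℝ} (hab : a ≤ b) :
    ∫ z in Set.Ioi a, Real.exp (-z ^ 2 / 2)
      = (∫ z in Set.Ioc a b, Real.exp (-z ^ 2 / 2))
        + ∫ z in Set.Ioi b, Real.exp (-z ^ 2 / 2) := by
  rw [← setIntegral_union (Set.Ioc_disjoint_Ioi le_rfl) measurableSet_Ioi
      gauss_integrable.integrableOn gauss_integrable.integrableOn,
    Set.Ioc_union_Ioi_eq_Ioi hab]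

/-- Tangent-line inequality for the convex nonincreasing function `gaussQ` on `[0,∞)`. -/
lemma tangent {m x : ℝ} (hm : 0 ≤ m) (hx : 0 ≤ x) :
    gaussQ m - (Real.sqrt (2 * Real.pi))⁻¹ * Real.exp (-m ^ 2 / 2) * (x - m)
      ≤ gaussQ x := by
  rcases le_total m x with h | h
  · have hsplit := split h
    have hb : ∫ z in Set.Ioc m x, Real.exp (-z ^ 2 / 2)
        ≤ Real.exp (-m ^ 2 / 2) * (x - m) := by
      have hmono : ∫ z in Set.Ioc m x, Real.exp (-z ^ 2 / 2)
          ≤ ∫ _z in Set.Ioc m x, Real.exp (-m ^ 2 / 2) := by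
        refine setIntegral_mono_on gauss_integrable.integrableOn
          (integrableOn_const measure_Ioc_lt_top.ne) measurableSet_Ioc ?_
        intro z hz
        apply Real.exp_le_exp.2
        nlinarith [hz.1, hz.2, hm]
      rwa [setIntegral_const, Real.volume_real_Ioc_of_le (by linarith), smul_eq_mul,
        mul_comm] at hmono
    have := mul_le_mul_of_nonneg_left hb C_nonneg
    unfold gaussQ
    rw [hsplit]
    nlinarith [this]
  · have hsplit := split h
    have hb : Real.exp (-m ^ 2 / 2) * (m - x)
        ≤ ∫ z in Set.Ioc x m, Real.exp (-z ^ 2 / 2) := by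
      have hmono : ∫ _z in Set.Ioc x m, Real.exp (-m ^ 2 / 2)
          ≤ ∫ z in Set.Ioc x m, Real.exp (-z ^ 2 / 2) := by
        refine setIntegral_mono_on (integrableOn_const measure_Ioc_lt_top.ne)
          gauss_integrable.integrableOn measurableSet_Ioc ?_
        intro z hz
        apply Real.exp_le_exp.2
        nlinarith [hz.1, hz.2, hx]
      rwa [setIntegral_const, Real.volume_real_Ioc_of_le (by linarith), smul_eq_mul,
        mul_comm] at hmono
    have := mul_le_mul_of_nonneg_left hb C_nonneg
    unfold gaussQ
    rw [hsplit]
    nlinarith [this]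

end GaussAux

/-- **Jensen-plus-Cauchy–Schwarz step (eqs. (19)–(21)).**
On a probability space, for measurable integrable `Φ : Ω → (0, 1/2]` and measurable
integrable `S̃ : Ω → [0, ∞)`,
`E[Φ·Q(√(S̃/(2Φ)))] ≥ E[Φ]·Q(√(E[S̃]/(2E[Φ])))`. -/
theorem jensen_schwarz_step
    {Ω : Type*} [MeasurableSpace Ω] (P : Measure Ω) [IsProbabilityMeasure P]
    (Φ : Ω → ℝ) (hΦmeas : Measurable Φ) (hΦint : Integrable Φ P)
    (hΦ : ∀ ω, Φ ω ∈ Set.Ioc (0 : ℝ) (1 / 2))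
    (S' : Ω → ℝ) (hS'meas : Measurable S') (hS'int : Integrable S' P)
    (hS' : ∀ ω, 0 ≤ S' ω) :
    ∫ ω, Φ ω * gaussQ (Real.sqrt (S' ω / (2 * Φ ω))) ∂P
      ≥ (∫ ω, Φ ω ∂P) * gaussQ (Real.sqrt ((∫ ω, S' ω ∂P) / (2 * ∫ ω, Φ ω ∂P))) := by
  set A := ∫ ω, Φ ω ∂P with hA
  set B := ∫ ω, S' ω ∂P with hB
  have hΦpos : ∀ ω, 0 < Φ ω := fun ω => (hΦ ω).1
  have hApos : 0 < A := by
    rw [hA, integral_pos_iff_support_of_nonneg (fun ω => (hΦpos ω).le) hΦint]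
    have : Function.support Φ = Set.univ := by
      ext ω; simp [Function.support, (hΦpos ω).ne']
    rw [this]
    simp
  have hBnonneg : 0 ≤ B := integral_nonneg hS'
  set m := Real.sqrt (B / (2 * A)) with hm
  have hmnonneg : 0 ≤ m := Real.sqrt_nonneg _
  set c := (Real.sqrt (2 * Real.pi))⁻¹ * Real.exp (-m ^ 2 / 2) with hc
  have hcnonneg : 0 ≤ c := mul_nonneg GaussAux.C_nonneg (Real.exp_pos _).le
  -- the weighted square root
  set g : Ω → ℝ := fun ω => Real.sqrt (Φ ω * S' ω / 2) with hg
  have hgmeas : Measurable g := (hΦmeas.mul hS'meas).div_const 2 |>.sqrt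
  have hgnonneg : ∀ ω, 0 ≤ g ω := fun ω => Real.sqrt_nonneg _
  have hgint : Integrable g P := by
    refine (hΦint.add hS'int).mono (hgmeas.aestronglyMeasurable) ?_
    filter_upwards with ω
    rw [Real.norm_of_nonneg (hgnonneg ω)]
    have h1 : Φ ω * S' ω / 2 ≤ (Φ ω + S' ω) ^ 2 := by
      nlinarith [(hΦpos ω).le, hS' ω]
    calc g ω ≤ Real.sqrt ((Φ ω + S' ω) ^ 2) := Real.sqrt_le_sqrt h1
      _ = |Φ ω + S' ω| := Real.sqrt_sq_eq_abs _
      _ ≤ ‖Φ ω + S' ω‖ := le_refl _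
  -- pointwise identity Φ ω * √(S'/(2Φ)) = g ω
  have hkey : ∀ ω, Φ ω * Real.sqrt (S' ω / (2 * Φ ω)) = g ω := by
    intro ω
    have hne := (hΦpos ω).ne'
    have h2 : Φ ω ^ 2 * (S' ω / (2 * Φ ω)) = Φ ω * S' ω / 2 := by
      field_simp
    calc Φ ω * Real.sqrt (S' ω / (2 * Φ ω))
        = Real.sqrt (Φ ω ^ 2) * Real.sqrt (S' ω / (2 * Φ ω)) := by
          rw [Real.sqrt_sq (hΦpos ω).le]
      _ = Real.sqrt (Φ ω ^ 2 * (S' ω / (2 * Φ ω))) :=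
          (Real.sqrt_mul (sq_nonneg _) _).symm
      _ = g ω := by rw [hg, h2]
  -- measurability and integrability of the LHS integrand
  have hQmeas : Measurable fun ω => gaussQ (Real.sqrt (S' ω / (2 * Φ ω))) :=
    GaussAux.gaussQ_antitone.measurable.comp
      ((hS'meas.div (hΦmeas.const_mul 2)).sqrt)
  have hLHSint : Integrable (fun ω => Φ ω * gaussQ (Real.sqrt (S' ω / (2 * Φ ω)))) P := by
    refine hΦint.mono ((hΦmeas.mul hQmeas).aestronglyMeasurable) ?_
    filter_upwards with ω
    have h0 := GaussAux.gaussQ_nonneg (Real.sqrt (S' ω / (2 * Φ ω)))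
    have h1 := GaussAux.gaussQ_le_one (Real.sqrt (S' ω / (2 * Φ ω)))
    rw [Real.norm_of_nonneg (mul_nonneg (hΦpos ω).le h0),
      Real.norm_of_nonneg (hΦpos ω).le]
    nlinarith [(hΦpos ω).le]
  -- pointwise tangent-line bound
  have hpt : ∀ ω, Φ ω * gaussQ m - c * (g ω - m * Φ ω)
      ≤ Φ ω * gaussQ (Real.sqrt (S' ω / (2 * Φ ω))) := by
    intro ω
    have ht := GaussAux.tangent (m := m) (x := Real.sqrt (S' ω / (2 * Φ ω)))
      hmnonneg (Real.sqrt_nonneg _)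
    have := mul_le_mul_of_nonneg_left ht (hΦpos ω).le
    calc Φ ω * gaussQ m - c * (g ω - m * Φ ω)
        = Φ ω * (gaussQ m - (Real.sqrt (2 * Real.pi))⁻¹ * Real.exp (-m ^ 2 / 2)
            * (Real.sqrt (S' ω / (2 * Φ ω)) - m)) := by
          rw [← hkey ω]; ring
      _ ≤ Φ ω * gaussQ (Real.sqrt (S' ω / (2 * Φ ω))) := this
  -- integrate the pointwise bound
  have hint1 : Integrable (fun ω => Φ ω * gaussQ m - c * (g ω - m * Φ ω)) P := by
    exact ((hΦint.mul_const _).sub ((hgint.sub (hΦint.const_mul m)).const_mul c))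
  have hIB : ∫ ω, (Φ ω * gaussQ m - c * (g ω - m * Φ ω)) ∂P
      = A * gaussQ m - c * ((∫ ω, g ω ∂P) - m * A) := by
    have e2 : ∫ ω, (g ω - m * Φ ω) ∂P = (∫ ω, g ω ∂P) - m * A := by
      rw [integral_sub hgint (hΦint.const_mul m), integral_const_mul]
    have i2 : Integrable (fun ω => g ω - m * Φ ω) P := hgint.sub (hΦint.const_mul m)
    have i3 : Integrable (fun ω => c * (g ω - m * Φ ω)) P := i2.const_mul c
    have e1 : ∫ ω, (Φ ω * gaussQ m - c * (g ω - m * Φ ω)) ∂P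
        = (∫ ω, Φ ω * gaussQ m ∂P) - ∫ ω, c * (g ω - m * Φ ω) ∂P :=
      integral_sub (hΦint.mul_const _) i3
    rw [e1, integral_const_mul, e2, integral_mul_const]
  have hstep1 : A * gaussQ m - c * ((∫ ω, g ω ∂P) - m * A)
      ≤ ∫ ω, Φ ω * gaussQ (Real.sqrt (S' ω / (2 * Φ ω))) ∂P := by
    rw [← hIB]
    exact integral_mono hint1 hLHSint hpt
  -- Cauchy–Schwarz: ∫ g ≤ m * A
  have hCS : ∫ ω, g ω ∂P ≤ m * A := by
    have hsqΦ : MemLp (fun ω => Real.sqrt (Φ ω)) (ENNReal.ofReal 2) P := by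
      rw [show ENNReal.ofReal 2 = 2 by norm_num]
      rw [memLp_two_iff_integrable_sq (hΦmeas.sqrt.aestronglyMeasurable)]
      refine hΦint.congr ?_
      filter_upwards with ω
      rw [Real.sq_sqrt (hΦpos ω).le]
    have hsqS : MemLp (fun ω => Real.sqrt (S' ω / 2)) (ENNReal.ofReal 2) P := by
      rw [show ENNReal.ofReal 2 = 2 by norm_num]
      rw [memLp_two_iff_integrable_sq ((hS'meas.div_const 2).sqrt.aestronglyMeasurable)]
      refine (hS'int.div_const 2).congr ?_
      filter_upwards with ω
      rw [Real.sq_sqrt (div_nonneg (hS' ω) (by norm_num))]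
    have hpq : Real.HolderConjugate 2 2 := Real.HolderConjugate.two_two
    have hcs := integral_mul_le_Lp_mul_Lq_of_nonneg hpq
      (f := fun ω => Real.sqrt (Φ ω)) (g := fun ω => Real.sqrt (S' ω / 2))
      (Filter.Eventually.of_forall fun ω => Real.sqrt_nonneg _)
      (Filter.Eventually.of_forall fun ω => Real.sqrt_nonneg _) hsqΦ hsqS
    have hprod : ∀ ω, Real.sqrt (Φ ω) * Real.sqrt (S' ω / 2) = g ω := by
      intro ω
      rw [hg, ← Real.sqrt_mul (hΦpos ω).le]
      congr 1
      ring
    rw [integral_congr_ae (Filter.Eventually.of_forall hprod)] at hcs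
    have hΦsq : ∫ ω, Real.sqrt (Φ ω) ^ (2:ℝ) ∂P = A := by
      rw [hA]
      refine integral_congr_ae ?_
      filter_upwards with ω
      rw [Real.rpow_two, Real.sq_sqrt (hΦpos ω).le]
    have hSsq : ∫ ω, Real.sqrt (S' ω / 2) ^ (2:ℝ) ∂P = B / 2 := by
      rw [hB, ← integral_div]
      refine integral_congr_ae ?_
      filter_upwards with ω
      rw [Real.rpow_two, Real.sq_sqrt (div_nonneg (hS' ω) (by norm_num))]
    rw [hΦsq, hSsq] at hcs
    have hmA : A ^ ((1:ℝ)/2) * (B / 2) ^ ((1:ℝ)/2) = m * A := by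
      rw [← Real.sqrt_eq_rpow, ← Real.sqrt_eq_rpow, hm]
      have h1 : Real.sqrt (B / (2 * A)) * A = Real.sqrt (B / (2 * A) * A ^ 2) := by
        rw [Real.sqrt_mul (by positivity), Real.sqrt_sq hApos.le]
      rw [h1, ← Real.sqrt_mul hApos.le]
      congr 1
      field_simp
    calc ∫ ω, g ω ∂P ≤ A ^ ((1:ℝ)/2) * (B / 2) ^ ((1:ℝ)/2) := hcs
      _ = m * A := hmA
  -- conclude
  have hfinal : A * gaussQ m ≤ A * gaussQ m - c * ((∫ ω, g ω ∂P) - m * A) := by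
    nlinarith [mul_nonneg hcnonneg (sub_nonneg.2 hCS)]
  exact le_trans hfinal hstep1
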